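/- (Graded Artin–Tate) Let A ⊆ B ⊆ C be a tower of G-graded commutative rings, where G is a commutative group. Suppose A is Noetherian (as a graded ring), C is a finitely generated A-algebra (generated by finitely many homogeneous elements), and C is a finitely generated B-module (generated by finitely many homogeneous elements). Then B is a finitely generated A-algebra. -/

import Mathlib

/-
Graded Artin–Tate. All the work happens inside the ambient graded ring `C`:
we develop an internal theory of graded subrings/submodules of `C`, prove an
internal graded Hilbert basis theorem (`ring_step`), graded Noetherianness of
finitely generated graded modules (`mod_fg`), and assemble them following the
classical Artin–Tate argument.
-/

namespace GradedAT

open DirectSum Submodule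

open scoped Classical

variable {G : Type*} [AddCommGroup G] [DecidableEq G] {C : Type*} [CommRing C]
  {𝒜 : G → AddSubgroup C} [GradedRing 𝒜]

variable (𝒜) in
/-- A set closed under taking homogeneous components. -/
def Gr (T : Set C) : Prop := ∀ x ∈ T, ∀ g : G, (DirectSum.decompose 𝒜 x g : C) ∈ T

/-- `S` as a submodule of `C` over itself. -/
def selfS (S : Subring C) : Submodule S C where
  carrier := S
  add_mem' := fun h h' => add_mem h h'
  zero_mem' := zero_mem S
  smul_mem' := fun s _ hx => mul_mem s.2 hx

variable (𝒜) in
/-- Graded-Noetherian: every graded ideal (as a submodule of `C`) is f.g. -/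
def NoethAt (S : Subring C) : Prop :=
  ∀ N : Submodule S C, N ≤ selfS S → Gr 𝒜 (N : Set C) → N.FG

lemma decompose_mul_sum (a b : C) (g : G) :
    (decompose 𝒜 (a * b) g : C)
      = ∑ h ∈ (decompose 𝒜 a).support,
          (decompose 𝒜 a h : C) * (decompose 𝒜 b (g - h) : C) := by
  conv_lhs => rw [← DirectSum.sum_support_decompose 𝒜 a, Finset.sum_mul]
  rw [decompose_sum, DFinsupp.finset_sum_apply, AddSubmonoidClass.coe_finset_sum]
  refine Finset.sum_congr rfl fun h _ => ?_
  have e : h + (g - h) = g := by abel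
  have := DirectSum.coe_decompose_mul_add_of_left_mem (j := g - h) 𝒜
    (b := b) (SetLike.coe_mem (decompose 𝒜 a h))
  rwa [e] at this

/-- The span of homogeneous elements over a graded subring is graded. -/
lemma gr_span (S : Subring C) (hS : Gr 𝒜 (S : Set C)) (T : Set C)
    (hT : ∀ x ∈ T, ∃ g : G, x ∈ 𝒜 g) : Gr 𝒜 (span S T : Set C) := by
  intro x hx
  induction hx using span_induction with
  | mem x hxT =>
    intro g
    obtain ⟨h, hxh⟩ := hT x hxT
    rcases eq_or_ne h g with rfl | hne
    · rw [decompose_of_mem_same 𝒜 hxh]; exact subset_span hxT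
    · rw [decompose_of_mem_ne 𝒜 hxh hne]; exact zero_mem _
  | zero => intro g; rw [decompose_zero]; simp
  | add x y hx hy ihx ihy =>
    intro g; rw [decompose_add]
    simpa using add_mem (ihx g) (ihy g)
  | smul s x hx ih =>
    intro g
    have : (s : C) * x = s • x := rfl
    rw [← this, decompose_mul_sum]
    refine sum_mem fun h _ => ?_
    have hs : (decompose 𝒜 (s : C) h : C) ∈ S := hS s s.2 h
    have := Submodule.smul_mem (span S T) ⟨_, hs⟩ (ih (g - h))
    exact this

lemma gr_sup {S : Subring C} {N P : Submodule S C} (hN : Gr 𝒜 (N : Set C))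
    (hP : Gr 𝒜 (P : Set C)) : Gr 𝒜 ((N ⊔ P : Submodule S C) : Set C) := by
  intro x hx g
  obtain ⟨y, hy, z, hz, rfl⟩ := Submodule.mem_sup.1 hx
  rw [decompose_add]
  exact Submodule.add_mem _ (Submodule.mem_sup_left (hN y hy g))
    (Submodule.mem_sup_right (hP z hz g))

lemma gr_inf {S : Subring C} {N P : Submodule S C} (hN : Gr 𝒜 (N : Set C))
    (hP : Gr 𝒜 (P : Set C)) : Gr 𝒜 ((N ⊓ P : Submodule S C) : Set C) :=
  fun x hx g => ⟨hN x hx.1 g, hP x hx.2 g⟩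

/-- A finitely generated graded submodule has a finite homogeneous generating set. -/
lemma homog_gens {S : Subring C} {N : Submodule S C} (hN : Gr 𝒜 (N : Set C))
    (hfg : N.FG) :
    ∃ T : Finset C, (∀ x ∈ T, x ∈ N ∧ ∃ g : G, x ∈ 𝒜 g) ∧ span S (T : Set C) = N := by
  obtain ⟨F, hF⟩ := hfg
  refine ⟨F.biUnion fun t => (decompose 𝒜 t).support.image
    fun g => (decompose 𝒜 t g : C), ?_, ?_⟩
  · intro x hx
    simp only [Finset.mem_biUnion, Finset.mem_image] at hx
    obtain ⟨t, htF, g, -, rfl⟩ := hx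
    have htN : t ∈ N := hF ▸ subset_span htF
    exact ⟨hN t htN g, g, SetLike.coe_mem _⟩
  · apply le_antisymm
    · rw [span_le]
      intro x hx
      simp only [Finset.coe_biUnion, Set.mem_iUnion, Finset.mem_coe, Finset.mem_image] at hx
      obtain ⟨t, htF, g, -, rfl⟩ := hx
      exact hN t (hF ▸ subset_span htF) g
    · rw [← hF, span_le]
      intro t htF
      have : (∑ g ∈ (decompose 𝒜 t).support, (decompose 𝒜 t g : C)) = t :=
        DirectSum.sum_support_decompose 𝒜 t
      rw [← this]
      refine sum_mem fun g hg => subset_span ?_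
      simp only [Finset.coe_biUnion, Set.mem_iUnion, Finset.mem_coe, Finset.mem_image]
      exact ⟨t, htF, g, hg, rfl⟩

/-- ACC for chains of graded ideals. -/
lemma acc_chain {S : Subring C} (hN : NoethAt 𝒜 S) (L : ℕ →o Submodule S C)
    (hle : ∀ n, L n ≤ selfS S) (hgr : ∀ n, Gr 𝒜 ((L n : Submodule S C) : Set C)) :
    ∃ M : ℕ, ∀ m, M ≤ m → L m = L M := by
  have hmem : ∀ x : C, x ∈ (⨆ k, L k) ↔ ∃ k, x ∈ L k := fun x =>
    Submodule.mem_iSup_of_chain L x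
  have hfg : (⨆ k, L k).FG := by
    refine hN _ (fun x hx => ?_) (fun x hx g => ?_)
    · obtain ⟨k, hk⟩ := (hmem x).1 hx; exact hle k hk
    · obtain ⟨k, hk⟩ := (hmem x).1 hx
      exact (hmem _).2 ⟨k, hgr k x hk g⟩
  obtain ⟨F, hF⟩ := hfg
  have : ∀ x ∈ F, ∃ k, x ∈ L k := fun x hx => (hmem x).1 (hF ▸ subset_span hx)
  choose ind hind using this
  refine ⟨F.sup fun x => if hx : x ∈ F then ind x hx else 0, fun m hm => ?_⟩
  set M := F.sup fun x => if hx : x ∈ F then ind x hx else 0 with hM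
  have hFM : ∀ x ∈ F, x ∈ L M := by
    intro x hx
    refine L.monotone ?_ (hind x hx)
    have := Finset.le_sup (f := fun x => if hx : x ∈ F then ind x hx else 0) hx
    simpa [hx] using this
  have h1 : (⨆ k, L k) ≤ L M := by
    rw [← hF, span_le]; intro x hx; exact hFM x hx
  exact le_antisymm (le_trans (le_iSup L m) h1) (L.monotone hm)

/-- Every graded submodule of a module spanned by finitely many homogeneous elements
over a graded-Noetherian graded subring is finitely generated. -/
lemma mod_fg {S : Subring C} (hS : Gr 𝒜 (S : Set C)) (hN : NoethAt 𝒜 S)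
    (Y : Finset C) (hY : ∀ y ∈ Y, ∃ g : G, y ∈ 𝒜 g) :
    ∀ N : Submodule S C, N ≤ span S (Y : Set C) → Gr 𝒜 (N : Set C) → N.FG := by
  induction Y using Finset.induction_on with
  | empty =>
    intro N hle _
    simp only [Finset.coe_empty, span_empty, le_bot_iff] at hle
    exact hle ▸ ⟨∅, by simp⟩
  | @insert a Y haY ih =>
    intro N hle hgr
    obtain ⟨d, hd⟩ := hY a (Finset.mem_insert_self a Y)
    have hY' : ∀ y ∈ Y, ∃ g : G, y ∈ 𝒜 g := fun y hy => hY y (Finset.mem_insert_of_mem hy)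
    set M' : Submodule S C := span S (Y : Set C) with hM'
    have grM' : Gr 𝒜 (M' : Set C) := gr_span S hS _ hY'
    set I : Submodule S C :=
      selfS S ⊓ Submodule.comap (LinearMap.mulRight S a) (N ⊔ M') with hI
    have memI : ∀ x : C, x ∈ I ↔ x ∈ S ∧ x * a ∈ N ⊔ M' := fun x => Iff.rfl
    have hIfg : I.FG := by
      refine hN I inf_le_left ?_
      intro x hx g
      obtain ⟨hxS, hxa⟩ := (memI x).1 hx
      refine (memI _).2 ⟨hS x hxS g, ?_⟩
      have := DirectSum.coe_decompose_mul_add_of_right_mem (i := g) 𝒜 hd (a := x)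
      rw [← this]
      exact gr_sup hgr grM' _ hxa (g + d)
    obtain ⟨F, hF⟩ := hIfg
    have hFI : ∀ f ∈ F, (f : C) ∈ I := fun f hf => hF ▸ subset_span hf
    have hwit : ∀ f ∈ F, ∃ n ∈ N, ∃ m ∈ M', n + m = f * a := by
      intro f hf
      exact Submodule.mem_sup.1 ((memI f).1 (hFI f hf)).2
    choose ν hν m' hm' hνm' using hwit
    have hN'fg : (N ⊓ M').FG := ih hY' (N ⊓ M') inf_le_right (gr_inf hgr grM')
    obtain ⟨T', hT'⟩ := hN'fg
    refine ⟨F.attach.image (fun f => ν f.1 f.2) ∪ T', le_antisymm ?_ ?_⟩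
    · rw [span_le]
      intro x hx
      simp only [Finset.coe_union, Set.mem_union, Finset.coe_image, Set.mem_image,
        Finset.mem_coe, Finset.mem_attach] at hx
      rcases hx with ⟨f, -, rfl⟩ | hx
      · exact hν _ _
      · have : x ∈ N ⊓ M' := hT' ▸ subset_span hx
        exact this.1
    · intro x hx
      have hx' : x ∈ span S ({a} : Set C) ⊔ M' := by
        have := hle hx
        rwa [Finset.coe_insert, ← Set.singleton_union, Submodule.span_union] at this
      obtain ⟨u, hu, m, hm, rfl⟩ := Submodule.mem_sup.1 hx'
      obtain ⟨c, rfl⟩ := Submodule.mem_span_singleton.1 hu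
      have hca : c • a = (c : C) * a := rfl
      have hcI : (c : C) ∈ I := by
        refine (memI _).2 ⟨c.2, ?_⟩
        rw [← hca]
        have : c • a = (c • a + m) - m := by ring
        rw [this]
        exact Submodule.sub_mem _ (Submodule.mem_sup_left hx) (Submodule.mem_sup_right hm)
      rw [← hF] at hcI
      obtain ⟨μ, -, hμ⟩ := mem_span_finset.1 hcI
      set w : C := ∑ f ∈ F.attach, μ (f : C) • ν f f.2 with hw
      have hwmem : w ∈ span S ((F.attach.image (fun f => ν f.1 f.2) ∪ T' : Finset C) : Set C) := by
        refine sum_mem fun f _ => Submodule.smul_mem _ _ (subset_span ?_)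
        simp only [Finset.coe_union, Set.mem_union, Finset.coe_image, Set.mem_image,
          Finset.mem_coe]
        exact Or.inl ⟨f, Finset.mem_attach _ _, rfl⟩
      have hwN : w ∈ N := sum_mem fun f _ => Submodule.smul_mem _ _ (hν _ _)
      have key : w = (c : C) * a - ∑ f ∈ F.attach, μ (f : C) • m' f f.2 := by
        rw [hw]
        have hterm : ∀ f : {x // x ∈ F}, μ (f : C) • ν f f.2
            = (μ (f : C) • (f : C)) * a - μ (f : C) • m' f f.2 := by
          intro f
          have hres : ν f f.2 = (f : C) * a - m' f f.2 := eq_sub_of_add_eq (hνm' f f.2)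
          rw [hres, smul_sub, smul_mul_assoc]
        rw [Finset.sum_congr rfl (fun f _ => hterm f), Finset.sum_sub_distrib, ← Finset.sum_mul]
        congr 2
        rw [Finset.sum_attach F (fun f => μ f • f)]
        exact hμ
      have hzNM : (c • a + m) - w ∈ N ⊓ M' := by
        refine ⟨Submodule.sub_mem _ hx hwN, ?_⟩
        have : (c • a + m) - w = m + ∑ f ∈ F.attach, μ (f : C) • m' f f.2 := by
          rw [key, hca]; ring
        rw [this]
        exact Submodule.add_mem _ hm (sum_mem fun f _ => Submodule.smul_mem _ _ (hm' _ _))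
      rw [← hT'] at hzNM
      have hsplit : c • a + m = ((c • a + m) - w) + w := by ring
      rw [hsplit]
      refine Submodule.add_mem _ (span_mono ?_ hzNM) hwmem
      intro u hu
      simp only [Finset.coe_union, Set.mem_union]
      exact Or.inr hu

/-- Internal graded Hilbert basis: adjoining one homogeneous element preserves
graded-Noetherianness. -/
lemma ring_step {S : Subring C} (hS : Gr 𝒜 (S : Set C)) (hN : NoethAt 𝒜 S)
    (t : C) (d : G) (hd : t ∈ 𝒜 d) :
    Gr 𝒜 ((Subring.closure ((S : Set C) ∪ {t}) : Subring C) : Set C) ∧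
      NoethAt 𝒜 (Subring.closure ((S : Set C) ∪ {t})) := by
  set S' : Subring C := Subring.closure ((S : Set C) ∪ {t}) with hS'
  have hSS' : (S : Set C) ⊆ (S' : Set C) := fun x hx => Subring.subset_closure (Or.inl hx)
  have htS'0 : t ∈ S' := Subring.subset_closure (Or.inr rfl)
  have htS' : ∀ j : ℕ, t ^ j ∈ S' := fun j => pow_mem htS'0 j
  -- the filtration
  set P : ℕ → Submodule S C :=
    fun m => span S (((Finset.range m).image (t ^ ·) : Finset C) : Set C) with hP
  have hPhom : ∀ m, ∀ x ∈ (((Finset.range m).image (t ^ ·) : Finset C) : Set C),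
      ∃ g : G, x ∈ 𝒜 g := by
    intro m x hx
    simp only [Finset.coe_image, Set.mem_image, Finset.mem_coe, Finset.mem_range] at hx
    obtain ⟨i, -, rfl⟩ := hx
    exact ⟨i • d, SetLike.pow_mem_graded i hd⟩
  have grP : ∀ m, Gr 𝒜 ((P m : Submodule S C) : Set C) := fun m =>
    gr_span S hS _ (hPhom m)
  have hPmono : Monotone P := by
    intro i j hij
    refine span_mono ?_
    intro x hx
    simp only [Finset.coe_image, Set.mem_image, Finset.mem_coe, Finset.mem_range] at hx ⊢
    obtain ⟨k, hk, rfl⟩ := hx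
    exact ⟨k, lt_of_lt_of_le hk hij, rfl⟩
  have hpowP : ∀ (i k : ℕ), k < i → t ^ k ∈ P i := by
    intro i k hk
    refine subset_span ?_
    simp only [Finset.coe_image, Set.mem_image, Finset.mem_coe, Finset.mem_range]
    exact ⟨k, hk, rfl⟩
  have tmulP : ∀ (j i : ℕ) (x : C), x ∈ P i → t ^ j * x ∈ P (i + j) := by
    intro j i x hx
    induction hx using span_induction with
    | mem x hxm =>
      simp only [Finset.coe_image, Set.mem_image, Finset.mem_coe, Finset.mem_range] at hxm
      obtain ⟨k, hk, rfl⟩ := hxm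
      rw [← pow_add]
      exact hpowP _ _ (by omega)
    | zero => rw [mul_zero]; exact zero_mem _
    | add x y _ _ ihx ihy => rw [mul_add]; exact add_mem ihx ihy
    | smul s x _ ihx =>
      have : t ^ j * (s • x) = s • (t ^ j * x) := mul_smul_comm _ _ _
      rw [this]; exact Submodule.smul_mem _ _ ihx
  have PmulP : ∀ (i j : ℕ) (x y : C), x ∈ P i → y ∈ P j → x * y ∈ P (i + j) := by
    intro i j x y hx hy
    induction hx using span_induction with
    | mem x hxm =>
      simp only [Finset.coe_image, Set.mem_image, Finset.mem_coe, Finset.mem_range] at hxm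
      obtain ⟨k, hk, rfl⟩ := hxm
      have := tmulP k j y hy
      exact hPmono (by omega) this
    | zero => rw [zero_mul]; exact zero_mem _
    | add x x' _ _ ihx ihx' => rw [add_mul]; exact add_mem ihx ihx'
    | smul s x _ ihx =>
      rw [smul_mul_assoc]; exact Submodule.smul_mem _ _ ihx
  have Psub : ∀ m, ∀ x ∈ P m, x ∈ S' := by
    intro m x hx
    induction hx using span_induction with
    | mem x hxm =>
      simp only [Finset.coe_image, Set.mem_image, Finset.mem_coe, Finset.mem_range] at hxm
      obtain ⟨k, -, rfl⟩ := hxm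
      exact htS' k
    | zero => exact zero_mem _
    | add x y _ _ ihx ihy => exact add_mem ihx ihy
    | smul s x _ ihx =>
      have : s • x = (s : C) * x := rfl
      rw [this]; exact mul_mem (hSS' s.2) ihx
  have Punion : ∀ x ∈ S', ∃ m, x ∈ P m := by
    intro x hx
    induction hx using Subring.closure_induction with
    | mem x hxm =>
      rcases hxm with hxS | hxt
      · refine ⟨1, ?_⟩
        have : (⟨x, hxS⟩ : S) • t ^ 0 = x := by
          rw [pow_zero]; exact mul_one x
        rw [← this]
        exact Submodule.smul_mem _ _ (hpowP 1 0 one_pos)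
      · refine ⟨2, ?_⟩
        simp only [Set.mem_singleton_iff] at hxt
        rw [hxt, ← pow_one t]
        exact hpowP 2 1 one_lt_two
    | zero => exact ⟨0, zero_mem _⟩
    | one =>
      refine ⟨1, ?_⟩
      have : (1 : C) = t ^ 0 := (pow_zero t).symm
      rw [this]
      exact hpowP 1 0 one_pos
    | add x y _ _ ihx ihy =>
      obtain ⟨i, hi⟩ := ihx; obtain ⟨j, hj⟩ := ihy
      exact ⟨max i j, add_mem (hPmono (le_max_left i j) hi) (hPmono (le_max_right i j) hj)⟩
    | neg x _ ihx =>
      obtain ⟨i, hi⟩ := ihx; exact ⟨i, neg_mem hi⟩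
    | mul x y _ _ ihx ihy =>
      obtain ⟨i, hi⟩ := ihx; obtain ⟨j, hj⟩ := ihy
      exact ⟨i + j, PmulP i j x y hi hj⟩
  have grS' : Gr 𝒜 (S' : Set C) := by
    intro x hx g
    obtain ⟨m, hm⟩ := Punion x hx
    exact Psub m _ (grP m x hm g)
  refine ⟨grS', ?_⟩
  intro J hJle hJgr
  -- J as an S-submodule
  set K : Submodule S C :=
    { carrier := (J : Set C)
      add_mem' := fun h h' => J.add_mem h h'
      zero_mem' := J.zero_mem
      smul_mem' := fun s x hx => J.smul_mem ⟨(s : C), hSS' s.2⟩ hx } with hK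
  have memK : ∀ x : C, x ∈ K ↔ x ∈ J := fun x => Iff.rfl
  have grK : Gr 𝒜 (K : Set C) := hJgr
  have hKt : ∀ (j : ℕ) (x : C), x ∈ K → t ^ j * x ∈ K := by
    intro j x hx
    exact J.smul_mem ⟨t ^ j, htS' j⟩ hx
  -- leading coefficient ideals
  set L : ℕ → Submodule S C :=
    fun m => selfS S ⊓ Submodule.comap (LinearMap.mulRight S (t ^ m)) (K ⊔ P m) with hL
  have memL : ∀ (m : ℕ) (x : C), x ∈ L m ↔ x ∈ S ∧ x * t ^ m ∈ K ⊔ P m := fun m x => Iff.rfl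
  have hLmono : Monotone L := by
    intro i j hij x hx
    obtain ⟨hxS, hxt⟩ := (memL i x).1 hx
    obtain ⟨k, hkK, p, hpP, hsum⟩ := Submodule.mem_sup.1 hxt
    refine (memL j x).2 ⟨hxS, ?_⟩
    have hpow : t ^ i * t ^ (j - i) = t ^ j := by rw [← pow_add]; congr 1; omega
    have : x * t ^ j = k * t ^ (j - i) + p * t ^ (j - i) := by
      rw [← add_mul, hsum, mul_assoc, hpow]
    rw [this]
    refine add_mem (Submodule.mem_sup_left ?_) (Submodule.mem_sup_right ?_)
    · rw [mul_comm]; exact hKt _ _ hkK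
    · rw [mul_comm]
      exact hPmono (by omega : i + (j - i) ≤ j) (tmulP (j - i) i p hpP)
  have hLle : ∀ m, L m ≤ selfS S := fun m => inf_le_left
  have hLgr : ∀ m, Gr 𝒜 ((L m : Submodule S C) : Set C) := by
    intro m x hx g
    obtain ⟨hxS, hxt⟩ := (memL m x).1 hx
    refine (memL m _).2 ⟨hS x hxS g, ?_⟩
    have := DirectSum.coe_decompose_mul_add_of_right_mem (i := g) 𝒜
      (SetLike.pow_mem_graded m hd) (a := x)
    rw [← this]
    exact gr_sup grK (grP m) _ hxt (g + m • d)
  obtain ⟨M, hM⟩ := acc_chain hN ⟨L, hLmono⟩ hLle hLgr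
  have hLfg : ∀ m, (L m).FG := fun m => hN _ (hLle m) (hLgr m)
  choose Fs hFs using hLfg
  have hwit : ∀ (m : ℕ), ∀ f ∈ Fs m, ∃ kk ∈ K, ∃ p ∈ P m, kk + p = f * t ^ m := by
    intro m f hf
    have hfL : f ∈ L m := (hFs m) ▸ subset_span hf
    exact Submodule.mem_sup.1 ((memL m f).1 hfL).2
  choose kk hkkK pp hppP hkkpp using hwit
  set gens : Finset C :=
    (Finset.range (M + 1)).biUnion
      (fun m => (Fs m).attach.image fun f => kk m f.1 f.2) with hgens
  set J₀ : Submodule S' C := span S' (gens : Set C) with hJ₀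
  have hgensJ : ∀ x ∈ gens, x ∈ J := by
    intro x hx
    simp only [hgens, Finset.mem_biUnion, Finset.mem_image, Finset.mem_attach,
      Finset.mem_range] at hx
    obtain ⟨m, -, f, -, rfl⟩ := hx
    exact hkkK m f.1 f.2
  have hJ₀J : J₀ ≤ J := by
    rw [hJ₀, span_le]; exact fun x hx => hgensJ x hx
  have hsmulJ₀ : ∀ (s : S) (z : C), z ∈ J₀ → (s : C) * z ∈ J₀ :=
    fun s z hz => J₀.smul_mem ⟨(s : C), hSS' s.2⟩ hz
  have htJ₀ : ∀ (j : ℕ) (z : C), z ∈ J₀ → t ^ j * z ∈ J₀ :=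
    fun j z hz => J₀.smul_mem ⟨t ^ j, htS' j⟩ hz
  -- main induction
  have main : ∀ m, ∀ x, x ∈ K → x ∈ P m → x ∈ J₀ := by
    intro m
    induction m with
    | zero =>
      intro x _ hxP
      have : P 0 = ⊥ := by
        simp only [hP, Finset.range_zero, Finset.image_empty, Finset.coe_empty, span_empty]
      rw [this] at hxP
      simp only [Submodule.mem_bot] at hxP
      rw [hxP]; exact zero_mem _
    | succ m ih =>
      intro x hxK hxP
      have hsplit : P (m + 1) = span S ({t ^ m} : Set C) ⊔ P m := by
        simp only [hP]
        rw [Finset.range_add_one, Finset.image_insert, Finset.coe_insert, Submodule.span_insert]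
      rw [hsplit] at hxP
      obtain ⟨u, hu, p, hpP, rfl⟩ := Submodule.mem_sup.1 hxP
      obtain ⟨c, rfl⟩ := Submodule.mem_span_singleton.1 hu
      have hca : c • t ^ m = (c : C) * t ^ m := rfl
      have hcL : (c : C) ∈ L m := by
        refine (memL m _).2 ⟨c.2, ?_⟩
        rw [← hca]
        have : c • t ^ m = (c • t ^ m + p) - p := by ring
        rw [this]
        exact Submodule.sub_mem _ (Submodule.mem_sup_left hxK) (Submodule.mem_sup_right hpP)
      set n := min m M with hn
      have hnm : n ≤ m := min_le_left m M
      have hLmn : L m = L n := by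
        rcases le_or_gt m M with h | h
        · have : n = m := by omega
          rw [this]
        · have h1 : L m = L M := hM m (le_of_lt h)
          have : n = M := by omega
          rw [this, h1]
      rw [hLmn, ← hFs n] at hcL
      obtain ⟨μ, -, hμ⟩ := mem_span_finset.1 hcL
      set w : C := ∑ f ∈ (Fs n).attach, μ (f : C) • (t ^ (m - n) * kk n f.1 f.2) with hw
      have hwJ₀ : w ∈ J₀ := by
        refine sum_mem fun f _ => ?_
        have hkgen : kk n f.1 f.2 ∈ J₀ := by
          refine subset_span ?_
          simp only [hgens, Finset.coe_biUnion, Set.mem_iUnion, Finset.mem_coe,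
            Finset.mem_biUnion, Finset.mem_image, Finset.mem_range]
          exact ⟨n, by omega, f, Finset.mem_attach _ _, rfl⟩
        exact hsmulJ₀ _ _ (htJ₀ _ _ hkgen)
      have hwK : w ∈ K := by
        refine sum_mem fun f _ => Submodule.smul_mem _ _ ?_
        exact hKt _ _ (hkkK n f.1 f.2)
      have hpow : t ^ (m - n) * t ^ n = t ^ m := by rw [← pow_add]; congr 1; omega
      have hterm : ∀ f : {x // x ∈ Fs n},
          t ^ (m - n) * kk n f.1 f.2 = (f : C) * t ^ m - t ^ (m - n) * pp n f.1 f.2 := by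
        intro f
        have hres : kk n f.1 f.2 = (f : C) * t ^ n - pp n f.1 f.2 :=
          eq_sub_of_add_eq (hkkpp n f.1 f.2)
        rw [hres, mul_sub]
        congr 1
        rw [← hpow]; ring
      have hsum1 : ∑ f ∈ (Fs n).attach, μ (f : C) • ((f : C) * t ^ m) = (c : C) * t ^ m := by
        have : ∀ f : {x // x ∈ Fs n},
            μ (f : C) • ((f : C) * t ^ m) = (μ (f : C) • (f : C)) * t ^ m :=
          fun f => (smul_mul_assoc _ _ _).symm
        rw [Finset.sum_congr rfl (fun f _ => this f), ← Finset.sum_mul]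
        congr 1
        rw [Finset.sum_attach (Fs n) (fun f => μ f • f)]
        exact hμ
      have hweq : w = (c : C) * t ^ m - ∑ f ∈ (Fs n).attach,
          μ (f : C) • (t ^ (m - n) * pp n f.1 f.2) := by
        rw [hw]
        rw [Finset.sum_congr rfl (fun f _ => by rw [hterm f, smul_sub])]
        rw [Finset.sum_sub_distrib, hsum1]
      have hzP : (c • t ^ m + p) - w ∈ P m := by
        have : (c • t ^ m + p) - w
            = p + ∑ f ∈ (Fs n).attach, μ (f : C) • (t ^ (m - n) * pp n f.1 f.2) := by
          rw [hweq, hca]; ring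
        rw [this]
        refine add_mem hpP (sum_mem fun f _ => Submodule.smul_mem _ _ ?_)
        have := tmulP (m - n) n _ (hppP n f.1 f.2)
        exact hPmono (by omega : n + (m - n) ≤ m) this
      have hzK : (c • t ^ m + p) - w ∈ K := Submodule.sub_mem _ hxK hwK
      have hzJ₀ : (c • t ^ m + p) - w ∈ J₀ := ih _ hzK hzP
      have : c • t ^ m + p = ((c • t ^ m + p) - w) + w := by ring
      rw [this]
      exact add_mem hzJ₀ hwJ₀
  refine ⟨gens, le_antisymm hJ₀J ?_⟩
  intro x hx
  obtain ⟨m, hm⟩ := Punion x (hJle hx)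
  exact main m x hx hm

lemma closure_union_finset {S : Subring C} (hS : Gr 𝒜 (S : Set C)) (hN : NoethAt 𝒜 S)
    (F : Finset C) (hF : ∀ b ∈ F, ∃ g : G, b ∈ 𝒜 g) :
    Gr 𝒜 ((Subring.closure ((S : Set C) ∪ F) : Subring C) : Set C) ∧
      NoethAt 𝒜 (Subring.closure ((S : Set C) ∪ F)) := by
  induction F using Finset.induction_on with
  | empty =>
    have : Subring.closure ((S : Set C) ∪ (∅ : Finset C)) = S := by
      simp [Subring.closure_eq]
    rw [this]; exact ⟨hS, hN⟩
  | @insert a F haF ih =>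
    have hF' : ∀ b ∈ F, ∃ g : G, b ∈ 𝒜 g := fun b hb => hF b (Finset.mem_insert_of_mem hb)
    obtain ⟨hgr, hnoeth⟩ := ih hF'
    obtain ⟨d, hd⟩ := hF a (Finset.mem_insert_self a F)
    have key := ring_step hgr hnoeth a d hd
    have heq : Subring.closure (((Subring.closure ((S : Set C) ∪ F) : Subring C) : Set C) ∪ {a})
        = Subring.closure ((S : Set C) ∪ (insert a F : Finset C)) := by
      apply le_antisymm
      · rw [Subring.closure_le]
        apply Set.union_subset
        · have hm : Subring.closure ((S : Set C) ∪ F)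
              ≤ Subring.closure ((S : Set C) ∪ (insert a F : Finset C)) := by
            apply Subring.closure_mono
            apply Set.union_subset_union_right
            intro b hb
            exact Finset.mem_coe.2 (Finset.mem_insert_of_mem hb)
          exact hm
        · intro b hb
          rw [Set.mem_singleton_iff] at hb
          rw [hb]
          exact Subring.subset_closure (Or.inr (Finset.mem_insert_self a F))
      · rw [Subring.closure_le]
        apply Set.union_subset
        · intro b hb
          exact Subring.subset_closure (Or.inl (Subring.subset_closure (Or.inl hb)))
        · intro b hb
          simp only [Finset.coe_insert, Set.mem_insert_iff, Finset.mem_coe] at hb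
          rcases hb with rfl | hb
          · exact Subring.subset_closure (Or.inr rfl)
          · exact Subring.subset_closure (Or.inl (Subring.subset_closure (Or.inr hb)))
    rw [heq] at key
    exact key

lemma adjoin_toSubring (A : Subring C) (T : Set C) :
    (Algebra.adjoin A T).toSubring = Subring.closure ((A : Set C) ∪ T) := by
  rw [Algebra.adjoin_eq_ring_closure]
  congr 1
  congr 1
  exact Subtype.range_coe_subtype

lemma noethAt_of_ideals {A : Subring C}
    (hAhom : ∀ x ∈ A, ∀ g : G, (DirectSum.decompose 𝒜 x g : C) ∈ A)
    (hAnoeth : ∀ I : Ideal A,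
      (∃ S : Set A, (∀ s ∈ S, ∃ g : G, (s : C) ∈ 𝒜 g) ∧ I = Ideal.span S) → I.FG) :
    NoethAt 𝒜 A := by
  intro N hle hgr
  set ι : A →ₗ[A] C := Algebra.linearMap A C with hι
  have hιa : ∀ a : A, ι a = (a : C) := fun a => rfl
  set I : Ideal A := N.comap ι with hI
  have hIfg : I.FG := by
    refine hAnoeth I ⟨{a : A | (a : C) ∈ N ∧ ∃ g : G, (a : C) ∈ 𝒜 g}, fun a ha => ha.2, ?_⟩
    apply le_antisymm
    · intro a haI
      have haN : (a : C) ∈ N := haI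
      have ha' : a = ∑ g ∈ (decompose 𝒜 (a : C)).support,
          (⟨(decompose 𝒜 (a : C) g : C), hAhom a a.2 g⟩ : A) := by
        apply Subtype.ext
        rw [AddSubmonoidClass.coe_finset_sum]
        exact (DirectSum.sum_support_decompose 𝒜 (a : C)).symm
      rw [ha']
      refine sum_mem fun g _ => Ideal.subset_span ?_
      exact ⟨hgr _ haN g, g, SetLike.coe_mem _⟩
    · rw [Ideal.span_le]
      intro a ha
      exact ha.1
  obtain ⟨F, hF⟩ := hIfg
  refine ⟨F.image (fun a : A => (a : C)), le_antisymm ?_ ?_⟩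
  · rw [span_le]
    intro b hb
    rw [Finset.mem_coe] at hb
    obtain ⟨a, haF, rfl⟩ := Finset.mem_image.1 hb
    have haI : a ∈ I := by rw [← hF]; exact Ideal.subset_span haF
    exact haI
  · intro n hn
    have h1 : n ∈ Submodule.map ι I := ⟨⟨n, hle hn⟩, hn, rfl⟩
    rw [← hF] at h1
    rw [Ideal.span, Submodule.map_span] at h1
    have : ι '' (F : Set A) = ((F.image (fun a : A => (a : C)) : Finset C) : Set C) := by
      rw [Finset.coe_image]
      rfl
    rwa [this] at h1

end GradedAT

section
open GradedAT DirectSum Submodule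
open scoped Pointwise
/-- Graded Artin–Tate: for a tower `A ⊆ B ⊆ C` of graded subrings of a `G`-graded
commutative ring `C`, with `A` graded-Noetherian, `C` a graded-finitely-generated
`A`-algebra and a graded-finitely-generated `B`-module, `B` is a graded-finitely-generated
`A`-algebra. -/
theorem stmt2 {G : Type*} [AddCommGroup G] [DecidableEq G]
    {C : Type*} [CommRing C]
    (𝒜 : G → AddSubgroup C) [GradedRing 𝒜]
    (A B : Subring C) (hAB : A ≤ B)
    -- `A` and `B` are graded subrings: stable under the homogeneous components
    (hAhom : ∀ x ∈ A, ∀ g : G, (DirectSum.decompose 𝒜 x g : C) ∈ A)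
    (hBhom : ∀ x ∈ B, ∀ g : G, (DirectSum.decompose 𝒜 x g : C) ∈ B)
    -- `A` is Noetherian as a graded ring: every homogeneous ideal is finitely generated
    (hAnoeth : ∀ I : Ideal A,
      (∃ S : Set A, (∀ s ∈ S, ∃ g : G, (s : C) ∈ 𝒜 g) ∧ I = Ideal.span S) → I.FG)
    -- `C` is an `A`-algebra generated by finitely many homogeneous elements
    (hCalg : ∃ s : Finset C, (∀ x ∈ s, ∃ g : G, x ∈ 𝒜 g) ∧
      Algebra.adjoin A (s : Set C) = ⊤)
    -- `C` is a `B`-module generated by finitely many homogeneous elements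
    (hCmod : ∃ s : Finset C, (∀ x ∈ s, ∃ g : G, x ∈ 𝒜 g) ∧
      Submodule.span B (s : Set C) = ⊤) :
    -- `B` is an `A`-algebra generated by finitely many homogeneous elements
    ∃ s : Finset C, (∀ x ∈ s, x ∈ B ∧ ∃ g : G, x ∈ 𝒜 g) ∧
      (Algebra.adjoin A (s : Set C)).toSubring = B := by
  classical
  obtain ⟨x, hxhom, hxadj⟩ := hCalg
  obtain ⟨y, hyhom, hyspan⟩ := hCmod
  -- coefficient functions for the B-module structure of C
  have hcoef : ∀ c : C, ∃ f : C → B, ∑ j ∈ y, f j • j = c := by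
    intro c
    have : c ∈ span B (y : Set C) := by rw [hyspan]; trivial
    obtain ⟨g, -, hg⟩ := mem_span_finset.1 this
    exact ⟨g, hg⟩
  choose f hf using hcoef
  have hfmul : ∀ c j, ((f c j : C)) * j = (f c j) • j := fun c j => rfl
  set xy : Finset C := x ∪ y * y with hxy
  set s : Finset C := xy.biUnion (fun c => y.biUnion (fun j =>
    (DirectSum.decompose 𝒜 ((f c j : C))).support.image
      (fun g => (DirectSum.decompose 𝒜 ((f c j : C)) g : C)))) with hs
  have hsB : ∀ b ∈ s, b ∈ B ∧ ∃ g : G, b ∈ 𝒜 g := by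
    intro b hb
    simp only [hs, Finset.mem_biUnion, Finset.mem_image] at hb
    obtain ⟨c, -, j, -, g, -, rfl⟩ := hb
    exact ⟨hBhom _ (f c j).2 g, g, SetLike.coe_mem _⟩
  set B₀ : Subring C := Subring.closure ((A : Set C) ∪ s) with hB₀
  have hAgr : Gr 𝒜 (A : Set C) := hAhom
  have hAnoethAt : NoethAt 𝒜 A := noethAt_of_ideals hAhom hAnoeth
  obtain ⟨grB₀, noethB₀⟩ :=
    closure_union_finset hAgr hAnoethAt s (fun b hb => (hsB b hb).2)
  have hB₀B : B₀ ≤ B := by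
    rw [hB₀, Subring.closure_le]
    apply Set.union_subset
    · exact hAB
    · intro b hb
      exact (hsB b hb).1
  have hfB₀ : ∀ c ∈ xy, ∀ j ∈ y, ((f c j : C)) ∈ B₀ := by
    intro c hc j hj
    rw [← DirectSum.sum_support_decompose 𝒜 ((f c j : C))]
    refine sum_mem fun g hg => ?_
    apply Subring.subset_closure
    right
    simp only [hs, Finset.mem_coe, Finset.mem_biUnion, Finset.mem_image]
    exact ⟨c, hc, j, hj, g, hg, rfl⟩
  -- the span of 1 and y over B₀ is everything
  set Y : Finset C := insert 1 y with hY
  set V : Submodule B₀ C := span B₀ (Y : Set C) with hV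
  have hyV : ∀ j ∈ y, j ∈ V := fun j hj =>
    subset_span (by rw [hY, Finset.coe_insert]; exact Set.mem_insert_of_mem _ hj)
  have h1V : (1 : C) ∈ V :=
    subset_span (by rw [hY, Finset.coe_insert]; exact Set.mem_insert _ _)
  have hxyV : ∀ c ∈ xy, c ∈ V := by
    intro c hc
    rw [← hf c]
    refine sum_mem fun j hj => ?_
    have : (f c j) • j = (⟨(f c j : C), hfB₀ c hc j hj⟩ : B₀) • j := rfl
    rw [this]
    exact Submodule.smul_mem _ _ (hyV j hj)
  have hmulV : ∀ u ∈ V, ∀ v ∈ V, u * v ∈ V := by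
    intro u hu v hv
    induction hu, hv using Submodule.span_induction₂ with
    | mem_mem p q hp hq =>
      rw [hY, Finset.coe_insert] at hp hq
      rcases hp with rfl | hp
      · rw [one_mul]
        exact subset_span (show q ∈ (Y : Set C) by rw [hY, Finset.coe_insert]; exact hq)
      · rcases hq with rfl | hq
        · rw [mul_one]
          exact subset_span (by rw [hY, Finset.coe_insert]; exact Set.mem_insert_of_mem _ hp)
        · exact hxyV _ (Finset.mem_union_right _
            (Finset.mul_mem_mul (Finset.mem_coe.1 hp) (Finset.mem_coe.1 hq)))
    | zero_left v hv => rw [zero_mul]; exact zero_mem _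
    | zero_right u hu => rw [mul_zero]; exact zero_mem _
    | add_left u u' v hu hu' hv ih ih' => rw [add_mul]; exact add_mem ih ih'
    | add_right u v v' hu hv hv' ih ih' => rw [mul_add]; exact add_mem ih ih'
    | smul_left b u v hu hv ih => rw [smul_mul_assoc]; exact Submodule.smul_mem _ _ ih
    | smul_right b u v hu hv ih => rw [mul_smul_comm]; exact Submodule.smul_mem _ _ ih
  have hVtop : ∀ c : C, c ∈ V := by
    intro c
    have hc : c ∈ Subring.closure ((A : Set C) ∪ x) := by
      rw [← adjoin_toSubring]
      rw [Subalgebra.mem_toSubring, hxadj]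
      trivial
    induction hc using Subring.closure_induction with
    | mem c hcm =>
      rcases hcm with hcA | hcx
      · have : (⟨c, Subring.subset_closure (Or.inl hcA)⟩ : B₀) • (1 : C) = c := mul_one c
        rw [← this]
        exact Submodule.smul_mem _ _ h1V
      · exact hxyV c (Finset.mem_union_left _ hcx)
    | zero => exact zero_mem _
    | one => exact h1V
    | add a b _ _ iha ihb => exact add_mem iha ihb
    | neg a _ iha => exact neg_mem iha
    | mul a b ha hb iha ihb => exact hmulV a iha b ihb
  -- B as a B₀-submodule of C
  set NB : Submodule B₀ C :=
    { carrier := (B : Set C)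
      add_mem' := fun h h' => add_mem h h'
      zero_mem' := zero_mem B
      smul_mem' := fun b₀ z hz => mul_mem (hB₀B b₀.2) hz } with hNB
  have hNBfg : NB.FG := by
    refine mod_fg grB₀ noethB₀ Y ?_ NB (fun b _ => hVtop b) hBhom
    intro v hv
    rw [hY] at hv
    rcases Finset.mem_insert.1 hv with rfl | hv
    · exact ⟨0, SetLike.one_mem_graded 𝒜⟩
    · exact hyhom v hv
  obtain ⟨T, hTmem, hTspan⟩ := homog_gens (N := NB) (show Gr 𝒜 (NB : Set C) from hBhom) hNBfg
  refine ⟨s ∪ T, ?_, ?_⟩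
  · intro v hv
    rcases Finset.mem_union.1 hv with hv | hv
    · exact ⟨(hsB v hv).1, (hsB v hv).2⟩
    · exact ⟨(hTmem v hv).1, (hTmem v hv).2⟩
  · rw [adjoin_toSubring]
    apply le_antisymm
    · rw [Subring.closure_le]
      apply Set.union_subset
      · exact hAB
      · intro b hb
        rw [Finset.coe_union] at hb
        rcases hb with hb | hb
        · exact (hsB b hb).1
        · exact (hTmem b hb).1
    · intro b hb
      have hbNB : b ∈ NB := hb
      rw [← hTspan] at hbNB
      clear hb
      have hB₀le : B₀ ≤ Subring.closure ((A : Set C) ∪ (s ∪ T : Finset C)) := by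
        rw [hB₀]
        apply Subring.closure_mono
        apply Set.union_subset_union_right
        intro z hz
        rw [Finset.coe_union]
        exact Or.inl hz
      induction hbNB using Submodule.span_induction with
      | mem z hz =>
        apply Subring.subset_closure
        right
        rw [Finset.coe_union]
        exact Or.inr hz
      | zero => exact zero_mem _
      | add u v _ _ ihu ihv => exact add_mem ihu ihv
      | smul b₀ z _ ihz =>
        have : b₀ • z = (b₀ : C) * z := rfl
        rw [this]
        exact mul_mem (hB₀le b₀.2) ihz
end
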